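/- Let ν : [0,∞) → [0,∞) be a nondecreasing function with ν(t) > 0 for t > 0, such that limsup_{s→0+} (∫_0^s ν(t)/t dt)/ν(s) < ∞ (in particular the integrals are finite for small s). Then there exist a constant C > 0 and a positive integer k₀ such that for all integers k ≥ k₀, ∑_{j=k+1}^∞ ν(2^{-j}) ≤ C·ν(2^{-k}). -/

import Mathlib

open Filter MeasureTheory

theorem stmt2 (ν : ℝ → ℝ) (hmono : MonotoneOn ν (Set.Ici 0))
    (hnonneg : ∀ t, 0 ≤ t → 0 ≤ ν t) (hpos : ∀ t, 0 < t → 0 < ν t)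
    (hint : ∃ s₀ > (0:ℝ), IntegrableOn (fun t => ν t / t) (Set.Ioc 0 s₀))
    (hlimsup : ∃ M : ℝ, ∀ᶠ s in nhdsWithin 0 (Set.Ioi 0),
      (∫ t in Set.Ioc (0:ℝ) s, ν t / t) / ν s ≤ M) :
    ∃ C > (0:ℝ), ∃ k₀ : ℕ, 0 < k₀ ∧ ∀ k ≥ k₀,
      Summable (fun j : ℕ => ν ((2:ℝ) ^ (-((k:ℤ) + 1 + j)))) ∧
      ∑' j : ℕ, ν ((2:ℝ) ^ (-((k:ℤ) + 1 + j))) ≤ C * ν ((2:ℝ) ^ (-(k:ℤ))) := by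
  obtain ⟨s₀, hs₀, hI⟩ := hint
  obtain ⟨M, hM⟩ := hlimsup
  rw [eventually_nhdsWithin_iff, Metric.eventually_nhds_iff] at hM
  obtain ⟨ε, hε, hMε⟩ := hM
  obtain ⟨n, hn⟩ := exists_pow_lt_of_lt_one (lt_min hε hs₀) (by norm_num : (1:ℝ)/2 < 1)
  refine ⟨max (2*M) 1, lt_of_lt_of_le one_pos (le_max_right _ _), max n 1,
    lt_of_lt_of_le one_pos (le_max_right _ _), ?_⟩
  intro k hk
  set a : ℝ := (2:ℝ) ^ (-(k:ℤ)) with ha_def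
  have ha : 0 < a := zpow_pos (by norm_num) _
  have haε : a < min ε s₀ := by
    have h1 : a = (1/2:ℝ)^k := by
      rw [ha_def, one_div, inv_pow, ← zpow_natCast, ← zpow_neg]
    have h2 : ((1:ℝ)/2)^k ≤ (1/2)^n := by
      apply pow_le_pow_of_le_one (by norm_num) (by norm_num)
      exact le_trans (le_max_left _ _) hk
    rw [h1]; exact lt_of_le_of_lt h2 hn
  have has₀ : a ≤ s₀ := le_of_lt (lt_of_lt_of_le haε (min_le_right _ _))
  set g : ℝ → ℝ := fun t => ν t / t with hg_def
  have hInt : IntegrableOn g (Set.Ioc 0 a) := hI.mono_set (Set.Ioc_subset_Ioc_right has₀)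
  have hg0 : ∀ t ∈ Set.Ioc (0:ℝ) a, 0 ≤ g t := fun t ht =>
    div_nonneg (hnonneg t ht.1.le) ht.1.le
  -- the integral bound
  have hIb : (∫ t in Set.Ioc (0:ℝ) a, g t) ≤ M * ν a := by
    have hd : dist a 0 < ε := by
      rw [Real.dist_eq, sub_zero, abs_of_pos ha]
      exact lt_of_lt_of_le haε (min_le_left _ _)
    have := hMε hd (Set.mem_Ioi.2 ha)
    exact (div_le_iff₀ (hpos a ha)).1 this
  -- the dyadic points
  set c : ℕ → ℝ := fun j => (2:ℝ) ^ (-(k:ℤ) - j) with hc_def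
  have hc0 : c 0 = a := by simp [hc_def, ha_def]
  have hcpos : ∀ j, 0 < c j := fun j => zpow_pos (by norm_num) _
  have hchalf : ∀ j, c (j+1) = c j / 2 := by
    intro j
    have he : (-(k:ℤ) - ((j:ℕ)+1:ℕ)) = (-(k:ℤ) - (j:ℕ)) - 1 := by push_cast; ring
    simp only [hc_def, he, zpow_sub_one₀ (two_ne_zero (α := ℝ))]
    ring
  have hcanti : ∀ j, c j ≤ c 0 := by
    intro j
    induction j with
    | zero => exact le_rfl
    | succ m ih =>
      rw [hchalf m]
      linarith [hcpos m, ih]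
  -- per-interval lower bound
  have hstep : ∀ j, ν (c (j+1)) / 2 ≤ ∫ t in Set.Ioc (c (j+1)) (c j), g t := by
    intro j
    have hsub : Set.Ioc (c (j+1)) (c j) ⊆ Set.Ioc 0 a := by
      rw [← hc0]
      exact Set.Ioc_subset_Ioc (hcpos (j+1)).le (hcanti j)
    have hle : ∀ x ∈ Set.Ioc (c (j+1)) (c j), ν (c (j+1)) / c j ≤ g x := by
      intro x hx
      have hx0 : 0 < x := lt_trans (hcpos (j+1)) hx.1
      exact div_le_div₀ (hnonneg x hx0.le)
        (hmono (Set.mem_Ici.2 (hcpos (j+1)).le) (Set.mem_Ici.2 hx0.le) hx.1.le)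
        hx0 hx.2
    have := setIntegral_ge_of_const_le_real measurableSet_Ioc measure_Ioc_lt_top.ne hle
      (hInt.mono_set hsub)
    rw [measureReal_def, Real.volume_Ioc] at this
    have hm : c j - c (j+1) = c j / 2 := by rw [hchalf j]; ring
    rw [ENNReal.toReal_ofReal (by rw [hm]; positivity)] at this
    calc ν (c (j+1)) / 2 = ν (c (j+1)) / c j * (c j - c (j+1)) := by
          rw [hm]; field_simp; exact (mul_div_cancel_right₀ _ (hcpos j).ne').symm
      _ ≤ _ := this
  -- telescoping partial sums
  have hsum : ∀ m : ℕ, ∑ j ∈ Finset.range m, ν (c (j+1)) / 2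
      ≤ ∫ t in Set.Ioc (c m) (c 0), g t := by
    intro m
    induction m with
    | zero => simp
    | succ m ih =>
      have hIntm : ∀ p q : ℕ, IntegrableOn g (Set.Ioc (c p) (c q)) := by
        intro p q
        refine hInt.mono_set ?_
        rw [← hc0]
        exact Set.Ioc_subset_Ioc (hcpos p).le (hcanti q)
      have hunion : ∫ t in Set.Ioc (c (m+1)) (c 0), g t
          = (∫ t in Set.Ioc (c (m+1)) (c m), g t) + ∫ t in Set.Ioc (c m) (c 0), g t := by
        rw [← setIntegral_union (Set.Ioc_disjoint_Ioc_of_le le_rfl) measurableSet_Ioc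
          (hIntm (m+1) m) (hIntm m 0),
          Set.Ioc_union_Ioc_eq_Ioc (by rw [hchalf m]; linarith [hcpos m]) (hcanti m)]
      rw [Finset.sum_range_succ, hunion]
      linarith [hstep m]
  have hmono_int : ∀ m : ℕ, (∫ t in Set.Ioc (c m) (c 0), g t)
      ≤ ∫ t in Set.Ioc (0:ℝ) a, g t := by
    intro m
    apply setIntegral_mono_set hInt
    · exact (ae_restrict_iff' measurableSet_Ioc).2 (Filter.Eventually.of_forall hg0)
    · apply HasSubset.Subset.eventuallyLE
      rw [← hc0]
      exact Set.Ioc_subset_Ioc (hcpos m).le le_rfl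
  -- identify the summand with ν (c (j+1))
  have hfc : ∀ j : ℕ, ν ((2:ℝ) ^ (-((k:ℤ) + 1 + j))) = ν (c (j+1)) := by
    intro j
    congr 1
    rw [hc_def]
    congr 1
    push_cast
    ring
  have hbound : ∀ m : ℕ, ∑ j ∈ Finset.range m, ν ((2:ℝ) ^ (-((k:ℤ) + 1 + j)))
      ≤ max (2*M) 1 * ν a := by
    intro m
    have h1 : ∑ j ∈ Finset.range m, ν ((2:ℝ) ^ (-((k:ℤ) + 1 + j)))
        = 2 * ∑ j ∈ Finset.range m, ν (c (j+1)) / 2 := by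
      rw [Finset.mul_sum]
      exact Finset.sum_congr rfl fun j _ => by rw [hfc j]; ring
    rw [h1]
    have h2 : ∑ j ∈ Finset.range m, ν (c (j+1)) / 2 ≤ M * ν a :=
      le_trans (hsum m) (le_trans (hmono_int m) hIb)
    calc 2 * ∑ j ∈ Finset.range m, ν (c (j+1)) / 2 ≤ 2 * (M * ν a) := by linarith
      _ = 2 * M * ν a := by ring
      _ ≤ max (2*M) 1 * ν a := by
          apply mul_le_mul_of_nonneg_right (le_max_left _ _) (hnonneg a ha.le)
  have hnn : ∀ j : ℕ, 0 ≤ ν ((2:ℝ) ^ (-((k:ℤ) + 1 + j))) := fun j =>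
    hnonneg _ (zpow_pos (by norm_num) _).le
  have hsummable : Summable (fun j : ℕ => ν ((2:ℝ) ^ (-((k:ℤ) + 1 + j)))) :=
    summable_of_sum_range_le hnn hbound
  exact ⟨hsummable, Summable.tsum_le_of_sum_range_le hsummable hbound⟩
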